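/- If G = (V,E) is a graph with Edmonds–Gallai decomposition D(G), A(G), C(G), then the maximum matching size of G equals (|V| − c(D(G)) + |A(G)|)/2, where c(D(G)) is the number of connected components of the subgraph induced by D(G). -/

import Mathlib

set_option linter.unusedSectionVars false
set_option linter.unusedVariables false

/-- `M` is a maximum matching of `G` (a matching covering the most vertices). -/
def IsMaxMatching {V : Type*} (G : SimpleGraph V) (M : G.Subgraph) : Prop :=
  M.IsMatching ∧ ∀ N : G.Subgraph, N.IsMatching → N.support.ncard ≤ M.support.ncard

/-- `D(G)`: the set of vertices missed by at least one maximum matching of `G`. -/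
def Dset {V : Type*} (G : SimpleGraph V) : Set V :=
  {v | ∃ M : G.Subgraph, IsMaxMatching G M ∧ v ∉ M.support}

/-- `A(G)`: vertices outside `D(G)` adjacent to a vertex of `D(G)`. -/
def Aset {V : Type*} (G : SimpleGraph V) : Set V :=
  {v | v ∉ Dset G ∧ ∃ u ∈ Dset G, G.Adj v u}

namespace GE

open SimpleGraph Set Classical

variable {V : Type*} [Fintype V] {G : SimpleGraph V}

/-! ### Basic constructions on subgraphs -/

/-- Build a subgraph from a symmetric adjacency predicate, with vertex set its support. -/
def mk' (G : SimpleGraph V) (R : V → V → Prop) (hsub : ∀ {v w}, R v w → G.Adj v w)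
    (hsymm : ∀ {v w}, R v w → R w v) : G.Subgraph where
  verts := {v | ∃ w, R v w}
  Adj := R
  adj_sub := hsub
  edge_vert := fun h => ⟨_, h⟩
  symm := ⟨fun _ _ h => hsymm h⟩

lemma mk'_adj {R hsub hsymm v w} : (mk' G R hsub hsymm).Adj v w ↔ R v w := Iff.rfl

lemma mk'_support {R hsub hsymm} : (mk' G R hsub hsymm).support = {v | ∃ w, R v w} := rfl

lemma mk'_isMatching {R hsub hsymm} (h : ∀ {v w}, R v w → ∃! u, R v u) :
    (mk' G R hsub hsymm).IsMatching := by
  rintro v ⟨w, hw⟩; exact h hw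

/-- Transfer a subgraph along `G' ≤ G`. -/
def toSup {G' : SimpleGraph V} (h : G' ≤ G) (M : G'.Subgraph) : G.Subgraph where
  verts := M.verts
  Adj := M.Adj
  adj_sub := fun hadj => h (M.adj_sub hadj)
  edge_vert := M.edge_vert
  symm := M.symm

lemma toSup_support {G' : SimpleGraph V} (h : G' ≤ G) (M : G'.Subgraph) :
    (toSup h M).support = M.support := rfl

lemma toSup_isMatching {G' : SimpleGraph V} (h : G' ≤ G) {M : G'.Subgraph}
    (hm : M.IsMatching) : (toSup h M).IsMatching := hm

/-- Transfer a subgraph of `G` whose edges lie in `G'` to a subgraph of `G'`. -/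
def ofSup {G' : SimpleGraph V} (M : G.Subgraph) (h : ∀ {v w}, M.Adj v w → G'.Adj v w) :
    G'.Subgraph where
  verts := M.verts
  Adj := M.Adj
  adj_sub := h
  edge_vert := M.edge_vert
  symm := M.symm

lemma ofSup_support {G' : SimpleGraph V} (M : G.Subgraph) (h : ∀ {v w}, M.Adj v w → G'.Adj v w) :
    (ofSup (G' := G') M h).support = M.support := rfl

lemma ofSup_isMatching {G' : SimpleGraph V} {M : G.Subgraph} (h : ∀ {v w}, M.Adj v w → G'.Adj v w)
    (hm : M.IsMatching) : (ofSup (G' := G') M h).IsMatching := hm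

/-! ### Existence of maximum matchings, parity -/

instance : Finite G.Subgraph := by
  have : Function.Injective (fun M : G.Subgraph => (M.verts, M.Adj)) := by
    intro M N h
    simp only [Prod.mk.injEq] at h
    exact SimpleGraph.Subgraph.ext h.1 h.2
  exact Finite.of_injective _ this

lemma exists_maxMatching (G : SimpleGraph V) : ∃ M, IsMaxMatching G M := by
  have hne : Nonempty {N : G.Subgraph // N.IsMatching} :=
    ⟨⊥, by rintro v ⟨⟩⟩
  obtain ⟨⟨M, hm⟩, hmax⟩ := Finite.exists_max
    (fun N : {N : G.Subgraph // N.IsMatching} => N.1.support.ncard)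
  exact ⟨M, hm, fun N hN => hmax ⟨N, hN⟩⟩

lemma maxMatching_card_eq {M N : G.Subgraph} (hM : IsMaxMatching G M) (hN : IsMaxMatching G N) :
    M.support.ncard = N.support.ncard :=
  le_antisymm (hN.2 M hM.1) (hM.2 N hN.1)

lemma even_support {M : G.Subgraph} (h : M.IsMatching) : Even M.support.ncard := by
  classical
  set M' : G.Subgraph := mk' G M.Adj (fun h => M.adj_sub h) (fun h => h.symm) with hM'
  have hm : M'.IsMatching := by
    apply mk'_isMatching
    intro v w hvw
    exact h (M.edge_vert hvw)
  haveI : Fintype M'.verts := Fintype.ofFinite _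
  have hverts : M'.verts = M.support := rfl
  have h2 : Even M'.verts.ncard := by
    rw [Set.ncard_eq_toFinset_card']
    exact hm.even_card
  rwa [hverts] at h2

/-! ### Closed sets and walks -/

/-- `S` is closed under adjacency in `H`. -/
def Closed (H : SimpleGraph V) (S : Set V) : Prop := ∀ ⦃v w⦄, H.Adj v w → (v ∈ S ↔ w ∈ S)

lemma Closed.mem_of_walk {H : SimpleGraph V} {S : Set V} (hS : Closed H S) {u v : V}
    (p : H.Walk u v) (hu : u ∈ S) : v ∈ S := by
  induction p with
  | nil => exact hu
  | cons h _ ih => exact ih ((hS h).mp hu)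

lemma Closed.reachable_induce {H : SimpleGraph V} {S : Set V}
    (hS : Closed H S) {u v : V} (p : H.Walk u v) (hu : u ∈ S) (hv : v ∈ S) :
    (H.induce S).Reachable ⟨u, hu⟩ ⟨v, hv⟩ := by
  induction p with
  | nil => rfl
  | @cons a b c h q ih =>
      have hb : b ∈ S := (hS h).mp hu
      exact (SimpleGraph.Adj.reachable (by exact h : (H.induce S).Adj ⟨a, hu⟩ ⟨b, hb⟩)).trans
        (ih hb hv)

lemma closed_supp {H : SimpleGraph V} (K : H.ConnectedComponent) : Closed H K.supp := by
  intro v w h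
  simp only [SimpleGraph.ConnectedComponent.mem_supp_iff]
  constructor
  · rintro rfl; exact (SimpleGraph.ConnectedComponent.connectedComponentMk_eq_of_adj h).symm
  · rintro rfl; exact SimpleGraph.ConnectedComponent.connectedComponentMk_eq_of_adj h

/-! ### The union graph of two matchings and toggling -/

/-- The spanning union of two subgraphs, as a simple graph. -/
def Hgr (M N : G.Subgraph) : SimpleGraph V := M.spanningCoe ⊔ N.spanningCoe

lemma Hgr_le (M N : G.Subgraph) : Hgr M N ≤ G := by
  intro v w h
  rcases h with h | h
  · exact M.adj_sub h
  · exact N.adj_sub h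

lemma hgr_adj_left {M N : G.Subgraph} {v w : V} (h : M.Adj v w) : (Hgr M N).Adj v w := Or.inl h

lemma hgr_adj_right {M N : G.Subgraph} {v w : V} (h : N.Adj v w) : (Hgr M N).Adj v w := Or.inr h

/-- Swap `M` for `N` on the closed set `S`. -/
def toggle (M N : G.Subgraph) (S : Set V) : G.Subgraph :=
  mk' G (fun v w => (v ∈ S ∧ w ∈ S ∧ N.Adj v w) ∨ (v ∉ S ∧ w ∉ S ∧ M.Adj v w))
    (by rintro v w (⟨_, _, h⟩ | ⟨_, _, h⟩); exacts [N.adj_sub h, M.adj_sub h])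
    (by rintro v w (⟨h1, h2, h⟩ | ⟨h1, h2, h⟩)
        exacts [Or.inl ⟨h2, h1, h.symm⟩, Or.inr ⟨h2, h1, h.symm⟩])

lemma toggle_isMatching {M N : G.Subgraph} (hM : M.IsMatching) (hN : N.IsMatching)
    {S : Set V} (hS : Closed (Hgr M N) S) : (toggle M N S).IsMatching := by
  apply mk'_isMatching
  rintro v w (⟨hvS, hwS, hvw⟩ | ⟨hvS, hwS, hvw⟩)
  · obtain ⟨u, hu, huniq⟩ := hN (N.edge_vert hvw)
    refine ⟨u, Or.inl ⟨hvS, (hS (hgr_adj_right hu)).mp hvS, hu⟩, ?_⟩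
    rintro z (⟨_, _, hz⟩ | ⟨hz, _, _⟩)
    · exact huniq z hz
    · exact absurd hvS hz
  · obtain ⟨u, hu, huniq⟩ := hM (M.edge_vert hvw)
    refine ⟨u, Or.inr ⟨hvS, fun hc => hvS ((hS (hgr_adj_left hu)).mpr hc), hu⟩, ?_⟩
    rintro z (⟨hz, _, _⟩ | ⟨_, _, hz⟩)
    · exact absurd hz hvS
    · exact huniq z hz

lemma toggle_mem_support {M N : G.Subgraph} {S : Set V} (hS : Closed (Hgr M N) S) {v : V} :
    v ∈ (toggle M N S).support ↔ (v ∈ S ∧ v ∈ N.support) ∨ (v ∉ S ∧ v ∈ M.support) := by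
  constructor
  · rintro ⟨w, (⟨h1, h2, h3⟩ | ⟨h1, h2, h3⟩)⟩
    exacts [Or.inl ⟨h1, w, h3⟩, Or.inr ⟨h1, w, h3⟩]
  · rintro (⟨h1, w, h2⟩ | ⟨h1, w, h2⟩)
    · exact ⟨w, Or.inl ⟨h1, (hS (hgr_adj_right h2)).mp h1, h2⟩⟩
    · exact ⟨w, Or.inr ⟨h1, fun hc => h1 ((hS (hgr_adj_left h2)).mpr hc), h2⟩⟩

lemma toggle_support {M N : G.Subgraph} {S : Set V} (hS : Closed (Hgr M N) S) :
    (toggle M N S).support = (S ∩ N.support) ∪ (M.support \ S) := by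
  ext v
  rw [toggle_mem_support hS]
  constructor
  · rintro (⟨h1, h2⟩ | ⟨h1, h2⟩)
    exacts [Or.inl ⟨h1, h2⟩, Or.inr ⟨h2, h1⟩]
  · rintro (⟨h1, h2⟩ | ⟨h1, h2⟩)
    exacts [Or.inl ⟨h1, h2⟩, Or.inr ⟨h2, h1⟩]

lemma toggle_ncard {M N : G.Subgraph} {S : Set V} (hS : Closed (Hgr M N) S) :
    (toggle M N S).support.ncard = (S ∩ N.support).ncard + (M.support \ S).ncard := by
  rw [toggle_support hS]
  exact Set.ncard_union_eq (by
    rw [Set.disjoint_left]; rintro x ⟨hx, -⟩ ⟨-, hx'⟩; exact hx' hx)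
    (Set.toFinite _) (Set.toFinite _)

lemma ncard_split (T S : Set V) : T.ncard = (S ∩ T).ncard + (T \ S).ncard := by
  rw [Set.inter_comm]
  rw [← Set.ncard_inter_add_ncard_diff_eq_ncard T S (Set.toFinite _)]

/-- Key comparison: if `M` is maximum, no closed set covers more `N`-vertices than
`M`-vertices. -/
lemma covered_le_of_max {M N : G.Subgraph} (hM : IsMaxMatching G M) (hN : N.IsMatching)
    {S : Set V} (hS : Closed (Hgr M N) S) :
    (S ∩ N.support).ncard ≤ (S ∩ M.support).ncard := by
  have h1 := hM.2 _ (toggle_isMatching hM.1 hN hS)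
  rw [toggle_ncard hS] at h1
  have h2 := ncard_split M.support S
  omega

lemma covered_eq_of_max {M N : G.Subgraph} (hM : IsMaxMatching G M) (hN : IsMaxMatching G N)
    {S : Set V} (hS : Closed (Hgr M N) S) :
    (S ∩ N.support).ncard = (S ∩ M.support).ncard := by
  refine le_antisymm (covered_le_of_max hM hN.1 hS) ?_
  have hS' : Closed (Hgr N M) S := by
    intro v w h
    exact hS (by rcases h with h | h; exacts [Or.inr h, Or.inl h])
  exact covered_le_of_max hN hM.1 hS'

lemma toggle_isMaxMatching {M N : G.Subgraph} (hM : IsMaxMatching G M) (hN : IsMaxMatching G N)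
    {S : Set V} (hS : Closed (Hgr M N) S) : IsMaxMatching G (toggle M N S) := by
  have hcard : (toggle M N S).support.ncard = M.support.ncard := by
    rw [toggle_ncard hS, covered_eq_of_max hM hN hS, ← ncard_split]
  exact ⟨toggle_isMatching hM.1 hN.1 hS, fun P hP => hcard ▸ hM.2 P hP⟩

lemma missed_eq_of_max {M N : G.Subgraph} (hM : IsMaxMatching G M) (hN : IsMaxMatching G N)
    {S : Set V} (hS : Closed (Hgr M N) S) :
    (S ∩ N.supportᶜ).ncard = (S ∩ M.supportᶜ).ncard := by
  have h := covered_eq_of_max hM hN hS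
  have h1 : (S ∩ N.supportᶜ) = S \ N.support := rfl
  have h2 : (S ∩ M.supportᶜ) = S \ M.support := rfl
  have e1 := ncard_split S N.support
  have e2 := ncard_split S M.support
  rw [Set.inter_comm N.support S] at e1
  rw [Set.inter_comm M.support S] at e2
  rw [h1, h2]
  omega

/-- Parity: a closed set covers an even number of `M`-vertices. -/
lemma even_inter_support {M N : G.Subgraph} (hM : M.IsMatching) {S : Set V}
    (hS : Closed (Hgr M N) S) : Even (S ∩ M.support).ncard := by
  classical
  set M' : G.Subgraph := mk' G (fun v w => v ∈ S ∧ w ∈ S ∧ M.Adj v w)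
    (fun h => M.adj_sub h.2.2) (fun h => ⟨h.2.1, h.1, h.2.2.symm⟩) with hM'def
  have hm : M'.IsMatching := by
    apply mk'_isMatching
    rintro v w ⟨hvS, hwS, hvw⟩
    obtain ⟨u, hu, huniq⟩ := hM (M.edge_vert hvw)
    exact ⟨u, ⟨hvS, (hS (hgr_adj_left hu)).mp hvS, hu⟩, fun z hz => huniq z hz.2.2⟩
  have hsupp : M'.support = S ∩ M.support := by
    ext v
    constructor
    · rintro ⟨w, hvS, hwS, hvw⟩
      exact ⟨hvS, w, hvw⟩
    · rintro ⟨hvS, w, hvw⟩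
      exact ⟨w, hvS, (hS (hgr_adj_left hvw)).mp hvS, hvw⟩
  rw [← hsupp]
  exact even_support hm

/-! ### Augmenting an adjacent missed pair -/

lemma support_sup' (M N : G.Subgraph) : (M ⊔ N).support = M.support ∪ N.support := by
  ext v
  simp only [SimpleGraph.Subgraph.mem_support, SimpleGraph.Subgraph.sup_adj, Set.mem_union]
  constructor
  · rintro ⟨w, h | h⟩
    exacts [Or.inl ⟨w, h⟩, Or.inr ⟨w, h⟩]
  · rintro (⟨w, h⟩ | ⟨w, h⟩)
    exacts [⟨w, Or.inl h⟩, ⟨w, Or.inr h⟩]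

lemma no_adj_missed {M : G.Subgraph} (hM : IsMaxMatching G M) {x y : V} (hadj : G.Adj x y)
    (hx : x ∉ M.support) (hy : y ∉ M.support) : False := by
  classical
  have hd : Disjoint M.support (G.subgraphOfAdj hadj).support := by
    rw [SimpleGraph.support_subgraphOfAdj]
    rw [Set.disjoint_right]
    intro z hz
    rcases hz with rfl | rfl
    exacts [hx, hy]
  have hm : (M ⊔ G.subgraphOfAdj hadj).IsMatching :=
    hM.1.sup (Subgraph.IsMatching.subgraphOfAdj hadj) hd
  have hle := hM.2 _ hm
  have hsupp : (M ⊔ G.subgraphOfAdj hadj).support = M.support ∪ {x, y} := by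
    rw [support_sup', SimpleGraph.support_subgraphOfAdj]
  rw [hsupp, Set.ncard_union_eq (by rwa [SimpleGraph.support_subgraphOfAdj] at hd)
    (Set.toFinite _) (Set.toFinite _)] at hle
  have h2 : ({x, y} : Set V).ncard = 2 := Set.ncard_pair hadj.ne
  omega

/-! ### Structure: each component of the union of two matchings has ≤ 2 deficient vertices -/

lemma matching_nbr_ncard {M : G.Subgraph} (hM : M.IsMatching) (v : V) :
    (M.spanningCoe.neighborSet v).ncard ≤ 1 := by
  by_cases hv : v ∈ M.support
  · obtain ⟨w, hw⟩ := hv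
    obtain ⟨u, hu, huniq⟩ := hM (M.edge_vert hw)
    have hsub : M.spanningCoe.neighborSet v ⊆ {u} := fun z hz => huniq z hz
    calc (M.spanningCoe.neighborSet v).ncard ≤ ({u} : Set V).ncard :=
          Set.ncard_le_ncard hsub (Set.toFinite _)
      _ = 1 := Set.ncard_singleton u
  · have hempty : M.spanningCoe.neighborSet v = ∅ := by
      ext z
      simp only [SimpleGraph.mem_neighborSet, SimpleGraph.Subgraph.spanningCoe_adj,
        Set.mem_empty_iff_false, iff_false]
      exact fun h => hv ⟨z, h⟩
    simp [hempty]

lemma hgr_nbr (M N : G.Subgraph) (v : V) :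
    (Hgr M N).neighborSet v = M.spanningCoe.neighborSet v ∪ N.spanningCoe.neighborSet v := rfl

lemma missed_nbr {M N : G.Subgraph} (hM : M.IsMatching) (hN : N.IsMatching) {v : V}
    (hv : v ∉ M.support) : ((Hgr M N).neighborSet v).ncard ≤ 1 := by
  have hempty : M.spanningCoe.neighborSet v = ∅ := by
    ext z
    simp only [SimpleGraph.mem_neighborSet, SimpleGraph.Subgraph.spanningCoe_adj,
      Set.mem_empty_iff_false, iff_false]
    exact fun h => hv ⟨z, h⟩
  rw [hgr_nbr, hempty, Set.empty_union]
  exact matching_nbr_ncard hN v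

lemma missed_nbr' {M N : G.Subgraph} (hM : M.IsMatching) (hN : N.IsMatching) {v : V}
    (hv : v ∉ N.support) : ((Hgr M N).neighborSet v).ncard ≤ 1 := by
  have hempty : N.spanningCoe.neighborSet v = ∅ := by
    ext z
    simp only [SimpleGraph.mem_neighborSet, SimpleGraph.Subgraph.spanningCoe_adj,
      Set.mem_empty_iff_false, iff_false]
    exact fun h => hv ⟨z, h⟩
  rw [hgr_nbr, hempty, Set.union_empty]
  exact matching_nbr_ncard hM v

lemma hgr_deg_le_two {M N : G.Subgraph} (hM : M.IsMatching) (hN : N.IsMatching) (v : V) :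
    ((Hgr M N).neighborSet v).ncard ≤ 2 := by
  rw [hgr_nbr]
  calc (M.spanningCoe.neighborSet v ∪ N.spanningCoe.neighborSet v).ncard
      ≤ (M.spanningCoe.neighborSet v).ncard + (N.spanningCoe.neighborSet v).ncard :=
        Set.ncard_union_le _ _
    _ ≤ 2 := by
        have := matching_nbr_ncard hM v
        have := matching_nbr_ncard hN v
        omega

lemma interior_two_nbrs {H : SimpleGraph V} {x y z : V} (p : H.Walk x y) (hp : p.IsPath)
    (hz : z ∈ p.support) (hzx : z ≠ x) (hzy : z ≠ y) :
    ∃ u w, u ≠ w ∧ u ∈ p.support ∧ w ∈ p.support ∧ H.Adj z u ∧ H.Adj z w := by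
  induction p with
  | nil =>
      simp only [SimpleGraph.Walk.support_nil, List.mem_singleton] at hz
      exact absurd hz hzx
  | @cons a b c h q ih =>
      rw [SimpleGraph.Walk.support_cons] at hz
      rcases List.mem_cons.mp hz with rfl | hzq
      · exact absurd rfl hzx
      · have hq : q.IsPath := (SimpleGraph.Walk.cons_isPath_iff h q).mp hp |>.1
        have haq : a ∉ q.support := ((SimpleGraph.Walk.cons_isPath_iff h q).mp hp).2
        by_cases hzb : z = b
        · subst hzb
          cases q with
          | nil => exact absurd rfl hzy
          | @cons b d c h2 r =>
              refine ⟨a, d, ?_, ?_, ?_, h.symm, h2⟩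
              · rintro rfl
                exact haq (by simp [SimpleGraph.Walk.support_cons,
                  SimpleGraph.Walk.start_mem_support r])
              · simp [SimpleGraph.Walk.support_cons]
              · simp [SimpleGraph.Walk.support_cons,
                  SimpleGraph.Walk.start_mem_support r]
        · obtain ⟨u, w, huw, hu, hw, hzu, hzw⟩ := ih hq hzq hzb hzy
          exact ⟨u, w, huw, by simp [SimpleGraph.Walk.support_cons, hu],
            by simp [SimpleGraph.Walk.support_cons, hw], hzu, hzw⟩

lemma endpoint_nbr_mem {H : SimpleGraph V} {x y : V}
    (hx : (H.neighborSet x).ncard ≤ 1) (hxy : x ≠ y) (p : H.Walk x y) {u : V}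
    (hadj : H.Adj x u) : u ∈ p.support := by
  cases p with
  | nil => exact absurd rfl hxy
  | @cons a b c h q =>
      have hb : b ∈ H.neighborSet x := h
      have hsub : ({b} : Set V) ⊆ H.neighborSet x := by simp [hb]
      have heq : ({b} : Set V) = H.neighborSet x := by
        apply Set.eq_of_subset_of_ncard_le hsub _ (Set.toFinite _)
        simpa using hx
      have hu : u ∈ ({b} : Set V) := heq ▸ (hadj : u ∈ H.neighborSet x)
      rw [Set.mem_singleton_iff] at hu
      subst hu
      simp [SimpleGraph.Walk.support_cons, SimpleGraph.Walk.start_mem_support q]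

lemma path_support_closed {H : SimpleGraph V} {x y : V}
    (hdeg : ∀ v, (H.neighborSet v).ncard ≤ 2)
    (hx : (H.neighborSet x).ncard ≤ 1) (hy : (H.neighborSet y).ncard ≤ 1)
    (hxy : x ≠ y) (p : H.Walk x y) (hp : p.IsPath) :
    Closed H {v | v ∈ p.support} := by
  have key : ∀ v u, v ∈ p.support → H.Adj v u → u ∈ p.support := by
    intro v u hv hadj
    by_cases hvx : v = x
    · subst hvx; exact endpoint_nbr_mem hx hxy p hadj
    by_cases hvy : v = y
    · subst hvy
      have := endpoint_nbr_mem hy (Ne.symm hxy) p.reverse hadj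
      rwa [SimpleGraph.Walk.support_reverse, List.mem_reverse] at this
    · obtain ⟨u', w', huw, hu', hw', hzu, hzw⟩ := interior_two_nbrs p hp hv hvx hvy
      have hsub : ({u', w'} : Set V) ⊆ H.neighborSet v := by
        rintro z (rfl | rfl)
        exacts [hzu, hzw]
      have heq : ({u', w'} : Set V) = H.neighborSet v := by
        apply Set.eq_of_subset_of_ncard_le hsub _ (Set.toFinite _)
        rw [Set.ncard_pair huw]
        exact hdeg v
      have hu : u ∈ ({u', w'} : Set V) := heq ▸ (hadj : u ∈ H.neighborSet v)
      rcases hu with rfl | rfl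
      exacts [hu', hw']
  intro v w h
  exact ⟨fun hv => key v w hv h, fun hw => key w v hw h.symm⟩

lemma no_three_leaves {H : SimpleGraph V} (hdeg : ∀ v, (H.neighborSet v).ncard ≤ 2)
    {x y z : V} (hxy : x ≠ y) (hxz : x ≠ z) (hyz : y ≠ z)
    (hx : (H.neighborSet x).ncard ≤ 1) (hy : (H.neighborSet y).ncard ≤ 1)
    (hz : (H.neighborSet z).ncard ≤ 1)
    (hrxy : H.Reachable x y) (hrxz : H.Reachable x z) : False := by
  obtain ⟨p0⟩ := hrxy
  obtain ⟨p, hp⟩ := p0.toPath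
  by_cases hzp : z ∈ p.support
  · obtain ⟨u, w, huw, hu, hw, hzu, hzw⟩ := interior_two_nbrs p hp hzp hxz.symm hyz.symm
    have h1 : 1 < (H.neighborSet z).ncard :=
      (Set.one_lt_ncard (Set.toFinite _)).mpr ⟨u, hzu, w, hzw, huw⟩
    omega
  · have hcl := path_support_closed hdeg hx hy hxy p hp
    obtain ⟨q⟩ := hrxz
    exact hzp (hcl.mem_of_walk q (by simp [SimpleGraph.Walk.start_mem_support]))

lemma miss_le_two {M N : G.Subgraph} (hM : M.IsMatching) (hN : N.IsMatching)
    (K : (Hgr M N).ConnectedComponent) :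
    (K.supp ∩ M.supportᶜ).ncard + (K.supp ∩ N.supportᶜ).ncard ≤ 2 := by
  by_contra hlt
  push_neg at hlt
  by_cases hboth : ∃ v, v ∈ K.supp ∧ v ∉ M.support ∧ v ∉ N.support
  · obtain ⟨v, hvS, hvM, hvN⟩ := hboth
    have hsingle : K.supp ⊆ {v} := by
      intro w hw
      rw [Set.mem_singleton_iff]
      by_contra hne
      have hr : (Hgr M N).Reachable v w := by
        rw [SimpleGraph.ConnectedComponent.mem_supp_iff] at hvS hw
        exact SimpleGraph.ConnectedComponent.exact (hvS.trans hw.symm)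
      obtain ⟨q⟩ := hr
      cases q with
      | nil => exact hne rfl
      | cons h _ =>
          rcases h with h | h
          exacts [hvM ⟨_, h⟩, hvN ⟨_, h⟩]
    have h1 : (K.supp ∩ M.supportᶜ).ncard ≤ 1 := by
      calc (K.supp ∩ M.supportᶜ).ncard ≤ ({v} : Set V).ncard :=
            Set.ncard_le_ncard (Set.inter_subset_left.trans hsingle) (Set.toFinite _)
        _ = 1 := Set.ncard_singleton v
    have h2 : (K.supp ∩ N.supportᶜ).ncard ≤ 1 := by
      calc (K.supp ∩ N.supportᶜ).ncard ≤ ({v} : Set V).ncard :=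
            Set.ncard_le_ncard (Set.inter_subset_left.trans hsingle) (Set.toFinite _)
        _ = 1 := Set.ncard_singleton v
    omega
  · push_neg at hboth
    have hdisj : Disjoint (K.supp ∩ M.supportᶜ) (K.supp ∩ N.supportᶜ) := by
      rw [Set.disjoint_left]
      rintro v ⟨hvS, hvM⟩ ⟨-, hvN⟩
      exact hvN (hboth v hvS hvM)
    have hcard : 2 < ((K.supp ∩ M.supportᶜ) ∪ (K.supp ∩ N.supportᶜ)).ncard := by
      rw [Set.ncard_union_eq hdisj (Set.toFinite _) (Set.toFinite _)]
      omega
    obtain ⟨a, ha, b, hb, c, hc, hab, hac, hbc⟩ :=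
      (Set.two_lt_ncard (Set.toFinite _)).mp hcard
    have hdeg1 : ∀ w, w ∈ (K.supp ∩ M.supportᶜ) ∪ (K.supp ∩ N.supportᶜ) →
        ((Hgr M N).neighborSet w).ncard ≤ 1 := by
      rintro w (⟨-, hw⟩ | ⟨-, hw⟩)
      exacts [missed_nbr hM hN hw, missed_nbr' hM hN hw]
    have hsupp : ∀ w, w ∈ (K.supp ∩ M.supportᶜ) ∪ (K.supp ∩ N.supportᶜ) → w ∈ K.supp := by
      rintro w (⟨hw, -⟩ | ⟨hw, -⟩) <;> exact hw
    have hreach : ∀ u w, u ∈ K.supp → w ∈ K.supp → (Hgr M N).Reachable u w := by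
      intro u w hu hw
      rw [SimpleGraph.ConnectedComponent.mem_supp_iff] at hu hw
      exact SimpleGraph.ConnectedComponent.exact (hu.trans hw.symm)
    exact no_three_leaves (hgr_deg_le_two hM hN) hab hac hbc
      (hdeg1 a ha) (hdeg1 b hb) (hdeg1 c hc)
      (hreach a b (hsupp a ha) (hsupp b hb)) (hreach a c (hsupp a ha) (hsupp c hc))

/-! ### Gallai's lemma -/

lemma dset_closed (hA : Aset G = ∅) : Closed G (Dset G) := by
  have key : ∀ v w, G.Adj v w → v ∈ Dset G → w ∈ Dset G := by
    intro v w hadj hv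
    by_contra hw
    have : w ∈ Aset G := ⟨hw, v, hv, hadj.symm⟩
    rw [hA] at this
    exact this
  intro v w h
  exact ⟨key v w h, key w v h.symm⟩

lemma gallai (hA : Aset G = ∅) :
    ∀ (M : G.Subgraph), IsMaxMatching G M → ∀ x y : V, x ∉ M.support → y ∉ M.support →
      x ≠ y → G.Reachable x y → False := by
  suffices h : ∀ d (M : G.Subgraph), IsMaxMatching G M → ∀ x y : V, x ∉ M.support →
      y ∉ M.support → x ≠ y → G.Reachable x y → G.dist x y = d → False by
    intro M hM x y hx hy hxy hr
    exact h (G.dist x y) M hM x y hx hy hxy hr rfl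
  intro d
  induction d using Nat.strong_induction_on with
  | _ d ih =>
  intro M hM x y hx hy hxy hr hd
  have hdpos : 0 < d := hd ▸ hr.pos_dist_of_ne hxy
  obtain ⟨p, hp⟩ := SimpleGraph.exists_walk_of_dist_ne_zero (hd ▸ Nat.pos_iff_ne_zero.mp hdpos)
  cases p with
  | nil => exact hxy rfl
  | @cons a b c hadj q =>
  -- here a = x, c = y, hadj : G.Adj x b
  rw [SimpleGraph.Walk.length_cons, hd] at hp
  by_cases hby : b = y
  · subst hby
    exact no_adj_missed hM hadj hx hy
  -- the distance from b to y is d - 1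
  have hreach_by : G.Reachable b y := ⟨q⟩
  have hdist_le : G.dist b y ≤ d - 1 := by
    have := SimpleGraph.dist_le q
    omega
  have hdist_ge : d - 1 ≤ G.dist b y := by
    obtain ⟨r, hr'⟩ := SimpleGraph.exists_walk_of_dist_ne_zero
      (G := G) (u := b) (v := y)
      (by simp [SimpleGraph.dist_ne_zero_iff_ne_and_reachable, hby, hreach_by])
    have h2 := SimpleGraph.dist_le (SimpleGraph.Walk.cons hadj r)
    rw [SimpleGraph.Walk.length_cons, hr', hd] at h2
    omega
  have hdistby : G.dist b y = d - 1 := le_antisymm hdist_le hdist_ge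
  -- b must be covered by M
  by_cases hbM : b ∈ M.support
  swap
  · exact no_adj_missed hM hadj hx hbM
  -- b is in Dset G
  have hxD : x ∈ Dset G := ⟨M, hM, hx⟩
  have hbD : b ∈ Dset G := (dset_closed hA hadj).mp hxD
  obtain ⟨N, hN, hbN⟩ := hbD
  set K := (Hgr M N).connectedComponentMk b with hK
  set S := K.supp with hSdef
  have hS : Closed (Hgr M N) S := closed_supp K
  have hbS : b ∈ S := rfl
  have heq : (S ∩ N.supportᶜ).ncard = (S ∩ M.supportᶜ).ncard := missed_eq_of_max hM hN hS
  have hle2 : (S ∩ M.supportᶜ).ncard + (S ∩ N.supportᶜ).ncard ≤ 2 := miss_le_two hM.1 hN.1 K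
  have hbmem : b ∈ S ∩ N.supportᶜ := ⟨hbS, hbN⟩
  have hpos : 0 < (S ∩ N.supportᶜ).ncard :=
    (Set.ncard_pos (Set.toFinite _)).mpr ⟨b, hbmem⟩
  have hone : (S ∩ N.supportᶜ).ncard = 1 ∧ (S ∩ M.supportᶜ).ncard = 1 := by
    constructor <;> omega
  obtain ⟨w, hw⟩ := Set.ncard_eq_one.mp hone.2
  -- the toggled matching
  have hM' := toggle_isMaxMatching hM hN hS
  have hbmiss : b ∉ (toggle M N S).support := by
    rw [toggle_mem_support hS]
    rintro (⟨-, hc⟩ | ⟨hc, -⟩)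
    exacts [hbN hc, hc hbS]
  by_cases hxS : x ∈ S
  · -- then w = x, and y ∉ S
    have hwx : x = w := by
      have : x ∈ S ∩ M.supportᶜ := ⟨hxS, hx⟩
      rw [hw] at this
      exact this
    have hyS : y ∉ S := by
      intro hyS
      have : y ∈ S ∩ M.supportᶜ := ⟨hyS, hy⟩
      rw [hw] at this
      rw [Set.mem_singleton_iff] at this
      exact hxy (hwx ▸ this ▸ rfl)
    have hymiss : y ∉ (toggle M N S).support := by
      rw [toggle_mem_support hS]
      rintro (⟨hc, -⟩ | ⟨-, hc⟩)
      exacts [hyS hc, hy hc]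
    have hreach : G.Reachable b y := hreach_by
    exact ih (d - 1) (by omega) _ hM' b y hbmiss hymiss hby hreach hdistby
  · -- x ∉ S: x and b both missed by toggle, adjacent
    have hxmiss : x ∉ (toggle M N S).support := by
      rw [toggle_mem_support hS]
      rintro (⟨hc, -⟩ | ⟨-, hc⟩)
      exacts [hxS hc, hx hc]
    exact no_adj_missed hM' hadj hxmiss hbmiss

/-! ### The base case: `A(G) = ∅` -/

lemma base_case (hA : Aset G = ∅) {M : G.Subgraph} (hM : IsMaxMatching G M) :
    (M.supportᶜ : Set V).ncard = Nat.card (G.induce (Dset G)).ConnectedComponent := by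
  classical
  have hDsub : (M.supportᶜ : Set V) ⊆ Dset G := fun v hv => ⟨M, hM, hv⟩
  set f : (M.supportᶜ : Set V) → (G.induce (Dset G)).ConnectedComponent :=
    fun v => SimpleGraph.connectedComponentMk _ ⟨v.1, hDsub v.2⟩ with hf
  have hinj : Function.Injective f := by
    intro v w hvw
    have hr : (G.induce (Dset G)).Reachable ⟨v.1, hDsub v.2⟩ ⟨w.1, hDsub w.2⟩ :=
      SimpleGraph.ConnectedComponent.exact hvw
    have hrG : G.Reachable v.1 w.1 := hr.map ⟨Subtype.val, fun h => h⟩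
    by_contra hne
    exact gallai hA M hM v.1 w.1 v.2 w.2 (fun h => hne (Subtype.ext h)) hrG
  have hsurj : Function.Surjective f := by
    intro K
    obtain ⟨⟨v, hvD⟩, hrep⟩ := Quot.exists_rep K
    obtain ⟨N, hN, hvN⟩ := hvD
    set K' := (Hgr M N).connectedComponentMk v with hK'
    have hS : Closed (Hgr M N) K'.supp := closed_supp K'
    have heq : (K'.supp ∩ N.supportᶜ).ncard = (K'.supp ∩ M.supportᶜ).ncard :=
      missed_eq_of_max hM hN hS
    have hpos : 0 < (K'.supp ∩ M.supportᶜ).ncard := by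
      rw [← heq]
      exact (Set.ncard_pos (Set.toFinite _)).mpr ⟨v, rfl, hvN⟩
    obtain ⟨w, hwS, hwM⟩ := (Set.ncard_pos (Set.toFinite _)).mp hpos
    refine ⟨⟨w, hwM⟩, ?_⟩
    have hreach : (Hgr M N).Reachable w v := by
      rw [SimpleGraph.ConnectedComponent.mem_supp_iff] at hwS
      exact SimpleGraph.ConnectedComponent.exact hwS
    obtain ⟨q⟩ := hreach
    have qG : G.Walk w v := q.mapLe (Hgr_le M N)
    have hind : (G.induce (Dset G)).Reachable ⟨w, hDsub hwM⟩ ⟨v, ⟨N, hN, hvN⟩⟩ :=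
      (dset_closed hA).reachable_induce qG (hDsub hwM) ⟨N, hN, hvN⟩
    rw [← hrep]
    exact SimpleGraph.ConnectedComponent.sound hind
  rw [← Nat.card_coe_set_eq]
  exact Nat.card_eq_of_bijective f ⟨hinj, hsurj⟩

/-! ### Vertex deletion and the stability lemma -/

/-- Delete all edges at `a`. -/
def delV (G : SimpleGraph V) (a : V) : SimpleGraph V where
  Adj v w := G.Adj v w ∧ v ≠ a ∧ w ≠ a
  symm := ⟨fun v w h => ⟨h.1.symm, h.2.2, h.2.1⟩⟩
  loopless := ⟨fun v h => G.irrefl h.1⟩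

lemma delV_le (G : SimpleGraph V) (a : V) : delV G a ≤ G := by intro v w h; exact h.1


lemma closed_comm {M N : G.Subgraph} {S : Set V} (hS : Closed (Hgr M N) S) :
    Closed (Hgr N M) S := by
  intro v w h
  exact hS (by rcases h with h | h; exacts [Or.inr h, Or.inl h])

lemma missed_le_of_max {M N : G.Subgraph} (hM : IsMaxMatching G M) (hN : N.IsMatching)
    {S : Set V} (hS : Closed (Hgr M N) S) :
    (S ∩ M.supportᶜ).ncard ≤ (S ∩ N.supportᶜ).ncard := by
  have h := covered_le_of_max hM hN hS
  have e1 := ncard_split S N.support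
  have e2 := ncard_split S M.support
  rw [Set.inter_comm N.support S] at e1
  rw [Set.inter_comm M.support S] at e2
  have h1 : (S ∩ N.supportᶜ) = S \ N.support := rfl
  have h2 : (S ∩ M.supportᶜ) = S \ M.support := rfl
  rw [h1, h2]
  omega

lemma isMax_of_card {G' : SimpleGraph V} {M N : G'.Subgraph} (hM : IsMaxMatching G' M)
    (hN : N.IsMatching) (h : N.support.ncard = M.support.ncard) : IsMaxMatching G' N :=
  ⟨hN, fun P hP => h ▸ hM.2 P hP⟩

lemma delV_adj {a v w : V} : (delV G a).Adj v w ↔ G.Adj v w ∧ v ≠ a ∧ w ≠ a := Iff.rfl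

lemma not_mem_support_delV {a : V} (M' : (delV G a).Subgraph) : a ∉ M'.support := by
  rintro ⟨w, h⟩
  exact (M'.adj_sub h).2.1 rfl

lemma a_covered {a : V} (ha : a ∈ Aset G) {M : G.Subgraph} (hM : IsMaxMatching G M) :
    a ∈ M.support := by
  by_contra h
  exact ha.1 ⟨M, hM, h⟩

/-- Remove the edge `ab` (and hence the vertices `a`, `b`) from a matching. -/
def minusPair (M : G.Subgraph) (a b : V) : G.Subgraph :=
  mk' G (fun v w => M.Adj v w ∧ v ≠ a ∧ w ≠ a ∧ v ≠ b ∧ w ≠ b)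
    (fun h => M.adj_sub h.1)
    (fun h => ⟨h.1.symm, h.2.2.1, h.2.1, h.2.2.2.2, h.2.2.2.1⟩)

lemma minusPair_isMatching {M : G.Subgraph} (hM : M.IsMatching) (a b : V) :
    (minusPair M a b).IsMatching := by
  apply mk'_isMatching
  rintro v w ⟨hvw, h1, h2, h3, h4⟩
  obtain ⟨u, hu, huniq⟩ := hM (M.edge_vert hvw)
  have hwu : w = u := huniq w hvw
  subst hwu
  exact ⟨w, ⟨hu, h1, h2, h3, h4⟩, fun z hz => huniq z hz.1⟩

lemma minusPair_support {M : G.Subgraph} (hM : M.IsMatching) {a b : V} (hab : M.Adj a b) :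
    (minusPair M a b).support = M.support \ {a, b} := by
  ext v
  constructor
  · rintro ⟨w, hvw, h1, h2, h3, h4⟩
    exact ⟨⟨w, hvw⟩, by simp [h1, h3]⟩
  · rintro ⟨⟨w, hvw⟩, hv⟩
    simp only [Set.mem_insert_iff, Set.mem_singleton_iff, not_or] at hv
    obtain ⟨hva, hvb⟩ := hv
    have hwa : w ≠ a := by
      rintro rfl
      obtain ⟨u, hu, huniq⟩ := hM (M.edge_vert hab)
      have h1 : v = u := huniq v hvw.symm
      have h2 : b = u := huniq b hab
      exact hvb (h1.trans h2.symm)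
    have hwb : w ≠ b := by
      rintro rfl
      obtain ⟨u, hu, huniq⟩ := hM (M.edge_vert hab.symm)
      have h1 : v = u := huniq v hvw.symm
      have h2 : a = u := huniq a hab.symm
      exact hva (h1.trans h2.symm)
    exact ⟨w, hvw, hva, hwa, hvb, hwb⟩

lemma stability_nu {a : V} (ha : a ∈ Aset G) {M : G.Subgraph} (hM : IsMaxMatching G M)
    {M' : (delV G a).Subgraph} (hM' : IsMaxMatching (delV G a) M') :
    M'.support.ncard + 2 = M.support.ncard := by
  classical
  have haM : a ∈ M.support := a_covered ha hM
  obtain ⟨b, hb⟩ := haM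
  have hmm := minusPair_isMatching hM.1 a b
  have hms := minusPair_support hM.1 hb
  have hedge : ∀ {v w}, (minusPair M a b).Adj v w → (delV G a).Adj v w :=
    fun h => ⟨M.adj_sub h.1, h.2.1, h.2.2.1⟩
  set P : (delV G a).Subgraph := ofSup (minusPair M a b) hedge with hP
  have hPs : P.support = M.support \ {a, b} := hms
  have habne : a ≠ b := (M.adj_sub hb).ne
  have hsub : ({a, b} : Set V) ⊆ M.support := by
    rintro z (rfl | rfl)
    exacts [⟨b, hb⟩, ⟨a, hb.symm⟩]
  have hP1 : P.support.ncard = M.support.ncard - 2 := by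
    rw [hPs, Set.ncard_diff hsub (Set.toFinite _), Set.ncard_pair habne]
  have h2le : 2 ≤ M.support.ncard := by
    have := Set.ncard_le_ncard hsub (Set.toFinite _)
    rwa [Set.ncard_pair habne] at this
  have hP2 : P.support.ncard ≤ M'.support.ncard := hM'.2 P (ofSup_isMatching hedge hmm)
  have hup : M'.support.ncard ≤ M.support.ncard := by
    have := hM.2 (toSup (delV_le G a) M') (toSup_isMatching _ hM'.1)
    rwa [toSup_support] at this
  have hne : M'.support.ncard ≠ M.support.ncard := by
    intro heq
    refine ha.1 ⟨toSup (delV_le G a) M', ?_, ?_⟩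
    · refine ⟨toSup_isMatching _ hM'.1, fun N hN => ?_⟩
      rw [toSup_support, heq]
      exact hM.2 N hN
    · rw [toSup_support]
      exact not_mem_support_delV M'
  obtain ⟨k, hk⟩ := even_support hM.1
  obtain ⟨l, hl⟩ := even_support hM'.1
  omega

lemma stability_D {a : V} (ha : a ∈ Aset G) : Dset (delV G a) = Dset G ∪ {a} := by
  classical
  obtain ⟨MG, hMG⟩ := exists_maxMatching G
  obtain ⟨M1, hM1⟩ := exists_maxMatching (delV G a)
  apply Set.Subset.antisymm
  · -- hard direction
    rintro v ⟨M', hM', hvM'⟩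
    by_cases hva : v = a
    · exact Or.inr hva
    left
    have ha2 := ha
    obtain ⟨haD, u, huD, hau⟩ := ha2
    by_cases hvu : v = u
    · exact hvu ▸ huD
    have huD2 := huD
    obtain ⟨N, hN, huN⟩ := huD2
    set Mg : G.Subgraph := toSup (delV_le G a) M' with hMg
    have hMgm : Mg.IsMatching := toSup_isMatching _ hM'.1
    have hvMg : v ∉ Mg.support := hvM'
    have haMg : a ∉ Mg.support := not_mem_support_delV M'
    have hMgcard : Mg.support.ncard + 2 = MG.support.ncard := by
      rw [toSup_support]
      exact stability_nu ha hMG hM'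
    set K := (Hgr Mg N).connectedComponentMk v with hK
    have hS : Closed (Hgr Mg N) K.supp := closed_supp K
    have hS' : Closed (Hgr N Mg) K.supp := closed_comm hS
    have hvS : v ∈ K.supp := rfl
    -- N is maximum, Mg is a matching: N misses at most as many in each component
    have hmle : (K.supp ∩ N.supportᶜ).ncard ≤ (K.supp ∩ Mg.supportᶜ).ncard :=
      missed_le_of_max hN hMgm hS'
    have hle2 : (K.supp ∩ Mg.supportᶜ).ncard + (K.supp ∩ N.supportᶜ).ncard ≤ 2 :=
      miss_le_two hMgm hN.1 K
    have hv1 : 0 < (K.supp ∩ Mg.supportᶜ).ncard :=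
      (Set.ncard_pos (Set.toFinite _)).mpr ⟨v, hvS, hvMg⟩
    -- parity considerations
    have hevM : Even (K.supp ∩ Mg.support).ncard := even_inter_support hMgm hS
    have hevN : Even (K.supp ∩ N.support).ncard := even_inter_support hN.1 hS'
    have esplitM := ncard_split K.supp Mg.support
    have esplitN := ncard_split K.supp N.support
    rw [Set.inter_comm Mg.support K.supp] at esplitM
    rw [Set.inter_comm N.support K.supp] at esplitN
    have hdM : (K.supp ∩ Mg.supportᶜ).ncard = (K.supp \ Mg.support).ncard := rfl
    have hdN : (K.supp ∩ N.supportᶜ).ncard = (K.supp \ N.support).ncard := rfl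
    have esplitMg := ncard_split Mg.support K.supp
    have esplitNN := ncard_split N.support K.supp
    by_cases hdelta : (K.supp ∩ Mg.supportᶜ).ncard = (K.supp ∩ N.supportᶜ).ncard
    · -- toggle N on S, get a maximum matching of G missing v
      set N' := toggle N Mg K.supp with hN'
      have hN'm : N'.IsMatching := toggle_isMatching hN.1 hMgm hS'
      have hcov : (K.supp ∩ Mg.support).ncard = (K.supp ∩ N.support).ncard := by
        omega
      have hN'card : N'.support.ncard = N.support.ncard := by
        rw [toggle_ncard hS']
        omega
      have hN'max : IsMaxMatching G N' := isMax_of_card hN hN'm hN'card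
      refine ⟨N', hN'max, ?_⟩
      rw [toggle_mem_support hS']
      rintro (⟨-, hc⟩ | ⟨hc, -⟩)
      exacts [hvMg hc, hc hvS]
    · -- Mg misses exactly two more in this component: (2, 0)
      have hm2 : (K.supp ∩ Mg.supportᶜ).ncard = 2 ∧ (K.supp ∩ N.supportᶜ).ncard = 0 := by
        obtain ⟨k1, hk1⟩ := hevM
        obtain ⟨k2, hk2⟩ := hevN
        constructor <;> omega
      by_cases haS : a ∈ K.supp
      · -- toggle N on S, then add the edge au
        have huS : u ∉ K.supp := by
          intro huS
          have hmem : u ∈ K.supp ∩ N.supportᶜ := ⟨huS, huN⟩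
          have h0 : (K.supp ∩ N.supportᶜ) = ∅ :=
            (Set.ncard_eq_zero (Set.toFinite _)).mp hm2.2
          rw [h0] at hmem
          exact hmem
        set N' := toggle N Mg K.supp with hN'
        have hN'm : N'.IsMatching := toggle_isMatching hN.1 hMgm hS'
        have hamiss : a ∉ N'.support := by
          rw [toggle_mem_support hS']
          rintro (⟨-, hc⟩ | ⟨hc, -⟩)
          exacts [haMg hc, hc haS]
        have humiss : u ∉ N'.support := by
          rw [toggle_mem_support hS']
          rintro (⟨hc, -⟩ | ⟨-, hc⟩)
          exacts [huS hc, huN hc]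
        have hvmiss : v ∉ N'.support := by
          rw [toggle_mem_support hS']
          rintro (⟨-, hc⟩ | ⟨hc, -⟩)
          exacts [hvMg hc, hc hvS]
        have hadj : G.Adj a u := hau
        have hdisj : Disjoint N'.support (G.subgraphOfAdj hadj).support := by
          rw [SimpleGraph.support_subgraphOfAdj, Set.disjoint_right]
          rintro z (rfl | rfl)
          exacts [hamiss, humiss]
        set N'' := N' ⊔ G.subgraphOfAdj hadj with hN''
        have hN''m : N''.IsMatching :=
          hN'm.sup (SimpleGraph.Subgraph.IsMatching.subgraphOfAdj hadj) hdisj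
        have hN''card : N''.support.ncard = N.support.ncard := by
          rw [hN'', support_sup', SimpleGraph.support_subgraphOfAdj,
            Set.ncard_union_eq (by rwa [SimpleGraph.support_subgraphOfAdj] at hdisj)
              (Set.toFinite _) (Set.toFinite _), Set.ncard_pair hadj.ne]
          have hN'card : N'.support.ncard + 2 = N.support.ncard := by
            rw [toggle_ncard hS']
            omega
          omega
        refine ⟨N'', isMax_of_card hN hN''m hN''card, ?_⟩
        rw [support_sup', SimpleGraph.support_subgraphOfAdj]
        rintro (hc | hc)
        · exact hvmiss hc
        · rcases hc with rfl | rfl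
          exacts [hva rfl, hvu rfl]
      · -- a ∉ S: toggling Mg on S gives a maximum matching of G missing a, contradiction
        exfalso
        set M'' := toggle Mg N K.supp with hM''
        have hM''m : M''.IsMatching := toggle_isMatching hMgm hN.1 hS
        have hM''card : M''.support.ncard = MG.support.ncard := by
          rw [toggle_ncard hS]
          omega
        have hamiss : a ∉ M''.support := by
          rw [toggle_mem_support hS]
          rintro (⟨hc, -⟩ | ⟨-, hc⟩)
          exacts [haS hc, haMg hc]
        exact haD ⟨M'', isMax_of_card hMG hM''m hM''card, hamiss⟩
  · -- easy direction
    rintro v (hvD | rfl)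
    · obtain ⟨Mv, hMv, hvMv⟩ := hvD
      have haMv : a ∈ Mv.support := a_covered ha hMv
      obtain ⟨b, hb⟩ := haMv
      have hmm := minusPair_isMatching hMv.1 a b
      have hedge : ∀ {x w}, (minusPair Mv a b).Adj x w → (delV G a).Adj x w :=
        fun h => ⟨Mv.adj_sub h.1, h.2.1, h.2.2.1⟩
      set P : (delV G a).Subgraph := ofSup (minusPair Mv a b) hedge with hP
      have hPs : P.support = Mv.support \ {a, b} := minusPair_support hMv.1 hb
      have habne : a ≠ b := (Mv.adj_sub hb).ne
      have hsub : ({a, b} : Set V) ⊆ Mv.support := by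
        rintro z (rfl | rfl)
        exacts [⟨b, hb⟩, ⟨a, hb.symm⟩]
      have hP1 : P.support.ncard = Mv.support.ncard - 2 := by
        rw [hPs, Set.ncard_diff hsub (Set.toFinite _), Set.ncard_pair habne]
      have h2le : 2 ≤ Mv.support.ncard := by
        have := Set.ncard_le_ncard hsub (Set.toFinite _)
        rwa [Set.ncard_pair habne] at this
      obtain ⟨M1, hM1⟩ := exists_maxMatching (delV G a)
      have hnu : M1.support.ncard + 2 = Mv.support.ncard := stability_nu ha hMv hM1
      have hPmax : IsMaxMatching (delV G a) P :=
        isMax_of_card hM1 (ofSup_isMatching hedge hmm) (by omega)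
      refine ⟨P, hPmax, ?_⟩
      rw [hPs]
      rintro ⟨hc, -⟩
      exact hvMv hc
    · obtain ⟨M1, hM1⟩ := exists_maxMatching (delV G v)
      exact ⟨M1, hM1, not_mem_support_delV M1⟩

lemma stability_A {a : V} (ha : a ∈ Aset G) : Aset (delV G a) = Aset G \ {a} := by
  have hD := stability_D ha
  ext w
  simp only [Aset, Set.mem_setOf_eq, hD, Set.mem_union, Set.mem_singleton_iff, Set.mem_diff]
  constructor
  · rintro ⟨hw1, u, hu, hadj⟩
    obtain ⟨hG, hwa, hua⟩ := hadj
    refine ⟨⟨fun hc => hw1 (Or.inl hc), u, ?_, hG⟩, hwa⟩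
    rcases hu with h | h
    · exact h
    · exact absurd h hua
  · rintro ⟨⟨hw1, u, hu, hadj⟩, hwa⟩
    refine ⟨?_, u, Or.inl hu, ⟨hadj, hwa, ?_⟩⟩
    · rintro (hc | hc)
      exacts [hw1 hc, hwa hc]
    · rintro rfl
      exact ha.1 hu

lemma reach_isolated {W : Type*} {H : SimpleGraph W} {w₀ : W} (hw : ∀ v, ¬ H.Adj w₀ v)
    {u : W} (h : H.Reachable w₀ u) : u = w₀ := by
  obtain ⟨p⟩ := h
  cases p with
  | nil => rfl
  | cons hadj _ => exact absurd hadj (hw _)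

lemma card_cc_isolated {W : Type*} [Fintype W] (H : SimpleGraph W) (w₀ : W)
    (hw : ∀ v, ¬ H.Adj w₀ v) :
    Nat.card H.ConnectedComponent
      = Nat.card (H.induce {w | w ≠ w₀}).ConnectedComponent + 1 := by
  classical
  have hclosed : Closed H {w | w ≠ w₀} := by
    intro u v hadj
    constructor
    · intro _ hc
      exact hw u (hc ▸ hadj).symm
    · intro _ hc
      exact hw v (hc ▸ hadj)
  set g : Option ((H.induce {w | w ≠ w₀}).ConnectedComponent) → H.ConnectedComponent :=
    fun o => o.elim (H.connectedComponentMk w₀)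
      (fun K => K.map ⟨Subtype.val, fun h => h⟩) with hg
  have hbij : Function.Bijective g := by
    constructor
    · rintro (_ | K) (_ | L) h
      · rfl
      · exfalso
        induction L using SimpleGraph.ConnectedComponent.ind with
        | _ v =>
          simp only [hg, Option.elim, SimpleGraph.ConnectedComponent.map_mk] at h
          exact v.2 (reach_isolated hw (SimpleGraph.ConnectedComponent.exact h))
      · exfalso
        induction K using SimpleGraph.ConnectedComponent.ind with
        | _ v =>
          simp only [hg, Option.elim, SimpleGraph.ConnectedComponent.map_mk] at h
          exact v.2 (reach_isolated hw (SimpleGraph.ConnectedComponent.exact h.symm))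
      · congr 1
        induction K using SimpleGraph.ConnectedComponent.ind with
        | _ v =>
        induction L using SimpleGraph.ConnectedComponent.ind with
        | _ u =>
          simp only [hg, Option.elim, SimpleGraph.ConnectedComponent.map_mk] at h
          obtain ⟨p⟩ := SimpleGraph.ConnectedComponent.exact h
          exact SimpleGraph.ConnectedComponent.sound
            (hclosed.reachable_induce p v.2 u.2)
    · intro K
      obtain ⟨v, hrep⟩ := Quot.exists_rep K
      by_cases hv : v = w₀
      · exact ⟨none, by rw [← hrep, hv]; rfl⟩
      · refine ⟨some ((H.induce {w | w ≠ w₀}).connectedComponentMk ⟨v, hv⟩), ?_⟩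
        rw [← hrep]
        simp only [hg, Option.elim, SimpleGraph.ConnectedComponent.map_mk]
        rfl
  rw [Nat.card_eq_of_bijective g hbij |>.symm, Finite.card_option]

lemma stability_comp {a : V} (ha : a ∈ Aset G) :
    Nat.card ((delV G a).induce (Dset (delV G a))).ConnectedComponent
      = Nat.card (G.induce (Dset G)).ConnectedComponent + 1 := by
  classical
  rw [stability_D ha]
  set D' : Set V := Dset G ∪ {a} with hD'
  set w₀ : D' := ⟨a, Or.inr rfl⟩ with hw₀
  have hiso : ∀ v, ¬ ((delV G a).induce D').Adj w₀ v := by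
    intro v hadj
    exact hadj.2.1 rfl
  rw [card_cc_isolated _ w₀ hiso]
  congr 1
  refine Nat.card_congr (SimpleGraph.Iso.connectedComponentEquiv ?_)
  -- iso between the doubly-induced graph and G.induce (Dset G)
  refine ⟨⟨?_, ?_, ?_, ?_⟩, ?_⟩
  · -- toFun
    rintro ⟨⟨v, hv⟩, hvne⟩
    refine ⟨v, ?_⟩
    rcases hv with h | h
    · exact h
    · exact absurd (Subtype.ext (Set.eq_of_mem_singleton h)) hvne
  · -- invFun
    rintro ⟨v, hv⟩
    refine ⟨⟨v, Or.inl hv⟩, ?_⟩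
    intro hc
    have : v = a := congrArg Subtype.val hc
    subst this
    exact ha.1 hv
  · rintro ⟨⟨v, hv⟩, hvne⟩
    rfl
  · rintro ⟨v, hv⟩
    rfl
  · -- map_rel_iff'
    rintro ⟨⟨v, hv⟩, hvne⟩ ⟨⟨w, hw⟩, hwne⟩
    simp only [Equiv.coe_fn_mk, SimpleGraph.comap_adj, Function.Embedding.coe_subtype]
    constructor
    · intro h
      refine ⟨h, ?_, ?_⟩
      · intro hc
        exact hvne (Subtype.ext hc)
      · intro hc
        exact hwne (Subtype.ext hc)
    · rintro ⟨h, -, -⟩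
      exact h

end GE

/-- Edmonds–Gallai formula for the matching number. -/
theorem stmt6 {V : Type*} [Fintype V] (G : SimpleGraph V)
    (M : G.Subgraph) (hM : IsMaxMatching G M) :
    M.support.ncard + Nat.card (G.induce (Dset G)).ConnectedComponent
      = Fintype.card V + (Aset G).ncard := by
  classical
  suffices h : ∀ (n : ℕ) (G : SimpleGraph V) (M : G.Subgraph), IsMaxMatching G M →
      (Aset G).ncard = n →
      M.support.ncard + Nat.card (G.induce (Dset G)).ConnectedComponent
        = Fintype.card V + (Aset G).ncard by
    exact h _ G M hM rfl
  intro n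
  induction n using Nat.strong_induction_on with
  | _ n ih =>
  intro G M hM hA
  rcases Nat.eq_zero_or_pos n with rfl | hpos
  · have hAe : Aset G = ∅ := (Set.ncard_eq_zero (Set.toFinite _)).mp hA
    have hb := GE.base_case hAe hM
    have hsplit : M.support.ncard + (M.supportᶜ : Set V).ncard = Fintype.card V := by
      rw [Set.ncard_add_ncard_compl _ (Set.toFinite _) (Set.toFinite _),
        Nat.card_eq_fintype_card]
    rw [hAe, Set.ncard_empty]
    omega
  · have hne : (Aset G).Nonempty := by
      rw [← Set.ncard_pos (Set.toFinite _)]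
      omega
    obtain ⟨a, haA⟩ := hne
    obtain ⟨M1, hM1⟩ := GE.exists_maxMatching (GE.delV G a)
    have hnu := GE.stability_nu haA hM hM1
    have hcomp := GE.stability_comp haA
    have hAcard : (Aset (GE.delV G a)).ncard + 1 = n := by
      rw [GE.stability_A haA, ← hA]
      rw [Set.ncard_diff_singleton_add_one haA (Set.toFinite _)]
    have hrec := ih (Aset (GE.delV G a)).ncard (by omega) (GE.delV G a) M1 hM1 rfl
    rw [hcomp] at hrec
    omega
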